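/- arXiv:1912.08646 — 3 statements merged into one kernel-verified Lean document; each statement's English description precedes it below -/
import Mathlib

section
/- Let R be a commutative ring, A a unital associative R-algebra, and W an invertible element of A ⊗[R] A satisfying the pentagon equation W₁₂ W₁₃ W₂₃ = W₂₃ W₁₂ in A ⊗ A ⊗ A. Then the R-algebra homomorphism Δ : A → A ⊗ A defined by Δ(x) = W⁻¹ (1 ⊗ x) W (the composition of the inclusion x ↦ 1 ⊗ x with conjugation by W) is coassociative: (Δ ⊗ id) ∘ Δ = (id ⊗ Δ) ∘ Δ as maps A → A ⊗ A ⊗ A, identifying (A ⊗ A) ⊗ A with A ⊗ (A ⊗ A) via the canonical associator algebra isomorphism. -/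
open scoped TensorProduct

/-- The leg embedding `W₁₂ : x ⊗ y ↦ x ⊗ y ⊗ 1`. -/
noncomputable def leg12 (R A : Type*) [CommRing R] [Ring A] [Algebra R A] :
    A ⊗[R] A →ₐ[R] A ⊗[R] (A ⊗[R] A) :=
  Algebra.TensorProduct.map (AlgHom.id R A)
    (Algebra.TensorProduct.includeLeft (S := R))

/-- The leg embedding `W₁₃ : x ⊗ y ↦ x ⊗ 1 ⊗ y`. -/
noncomputable def leg13 (R A : Type*) [CommRing R] [Ring A] [Algebra R A] :
    A ⊗[R] A →ₐ[R] A ⊗[R] (A ⊗[R] A) :=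
  Algebra.TensorProduct.map (AlgHom.id R A) Algebra.TensorProduct.includeRight

/-- The leg embedding `W₂₃ : x ⊗ y ↦ 1 ⊗ x ⊗ y`. -/
noncomputable def leg23 (R A : Type*) [CommRing R] [Ring A] [Algebra R A] :
    A ⊗[R] A →ₐ[R] A ⊗[R] (A ⊗[R] A) :=
  Algebra.TensorProduct.includeRight

lemma aux_assoc_tmul_one (R A : Type*) [CommRing R] [Ring A] [Algebra R A]
    (u : A ⊗[R] A) :
    (Algebra.TensorProduct.assoc R R R A A A) (u ⊗ₜ[R] (1 : A)) = leg12 R A u := by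
  induction u using TensorProduct.induction_on with
  | zero => simp
  | tmul a b => simp [leg12, Algebra.TensorProduct.assoc_tmul]
  | add u v hu hv => simp [TensorProduct.add_tmul, hu, hv]

lemma aux_leg23_apply (R A : Type*) [CommRing R] [Ring A] [Algebra R A]
    (u : A ⊗[R] A) : leg23 R A u = (1 : A) ⊗ₜ[R] u := rfl

lemma aux_leg13_tmul (R A : Type*) [CommRing R] [Ring A] [Algebra R A]
    (a b : A) : leg13 R A (a ⊗ₜ[R] b) = a ⊗ₜ[R] ((1 : A) ⊗ₜ[R] b) := rfl


lemma aux_conj_units {M : Type*} [Monoid M] (a b c : Mˣ) (T : M)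
    (hP : a * b * c = c * a) (hc : T * (a : M) = (a : M) * T) :
    ((a⁻¹ : Mˣ) : M) * (((c⁻¹ : Mˣ) : M) * T * (c : M)) * (a : M)
      = ((c⁻¹ : Mˣ) : M) * (((b⁻¹ : Mˣ) : M) * T * (b : M)) * (c : M) := by
  have hc' : ∀ z : M, ((a⁻¹ : Mˣ) : M) * (T * ((a : M) * z)) = T * z := by
    intro z
    have h : T * ((a : M) * z) = (a : M) * (T * z) := by
      rw [← mul_assoc, hc, mul_assoc]
    rw [h, Units.inv_mul_cancel_left]
  calc ((a⁻¹ : Mˣ) : M) * (((c⁻¹ : Mˣ) : M) * T * (c : M)) * (a : M)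
      = (((c * a)⁻¹ : Mˣ) : M) * T * ((c * a : Mˣ) : M) := by
        rw [mul_inv_rev, Units.val_mul, Units.val_mul]
        simp only [mul_assoc]
    _ = (((a * b * c)⁻¹ : Mˣ) : M) * T * ((a * b * c : Mˣ) : M) := by rw [hP]
    _ = ((c⁻¹ : Mˣ) : M) * (((b⁻¹ : Mˣ) : M) * T * (b : M)) * (c : M) := by
        rw [mul_inv_rev, mul_inv_rev, Units.val_mul, Units.val_mul, Units.val_mul,
          Units.val_mul]
        simp only [mul_assoc]
        rw [hc']

/-- If `W` is an invertible element of `A ⊗ A` satisfying the pentagon equation, then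
`Δ(x) = W⁻¹ (1 ⊗ x) W` defines a coassociative comultiplication on `A`. -/
theorem pentagon_implies_coassociative
    (R A : Type*) [CommRing R] [Ring A] [Algebra R A]
    (W : (A ⊗[R] A)ˣ)
    (pentagon : leg12 R A (W : A ⊗[R] A) * leg13 R A (W : A ⊗[R] A) *
        leg23 R A (W : A ⊗[R] A)
      = leg23 R A (W : A ⊗[R] A) * leg12 R A (W : A ⊗[R] A))
    (Δ : A →ₐ[R] A ⊗[R] A)
    (hΔ : ∀ x : A, Δ x = (↑W⁻¹ : A ⊗[R] A) * (1 ⊗ₜ[R] x) * (W : A ⊗[R] A)) :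
    ∀ x : A,
      (Algebra.TensorProduct.assoc R R R A A A)
          ((Algebra.TensorProduct.map Δ (AlgHom.id R A)) (Δ x))
        = (Algebra.TensorProduct.map (AlgHom.id R A) Δ) (Δ x) := by
  intro x
  set u12 : (A ⊗[R] (A ⊗[R] A))ˣ := Units.map (leg12 R A).toMonoidHom W with hu12
  set u13 : (A ⊗[R] (A ⊗[R] A))ˣ := Units.map (leg13 R A).toMonoidHom W with hu13
  set u23 : (A ⊗[R] (A ⊗[R] A))ˣ := Units.map (leg23 R A).toMonoidHom W with hu23
  have hv12 : (u12 : A ⊗[R] (A ⊗[R] A)) = leg12 R A (W : A ⊗[R] A) := rfl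
  have hv13 : (u13 : A ⊗[R] (A ⊗[R] A)) = leg13 R A (W : A ⊗[R] A) := rfl
  have hv23 : (u23 : A ⊗[R] (A ⊗[R] A)) = leg23 R A (W : A ⊗[R] A) := rfl
  have hi12 : ((u12⁻¹ : _ˣ) : A ⊗[R] (A ⊗[R] A)) = leg12 R A (↑W⁻¹ : A ⊗[R] A) := rfl
  have hi13 : ((u13⁻¹ : _ˣ) : A ⊗[R] (A ⊗[R] A)) = leg13 R A (↑W⁻¹ : A ⊗[R] A) := rfl
  have hi23 : ((u23⁻¹ : _ˣ) : A ⊗[R] (A ⊗[R] A)) = leg23 R A (↑W⁻¹ : A ⊗[R] A) := rfl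
  have hP : u12 * u13 * u23 = u23 * u12 := by
    apply Units.ext
    simpa [hv12, hv13, hv23] using pentagon
  -- key1
  have key1 : ∀ u : A ⊗[R] A,
      (Algebra.TensorProduct.assoc R R R A A A)
        ((Algebra.TensorProduct.map Δ (AlgHom.id R A)) u)
      = (u12⁻¹ : _ˣ) * leg23 R A u * u12 := by
    intro u
    induction u using TensorProduct.induction_on with
    | zero => simp
    | tmul a b =>
      have h1 : (Algebra.TensorProduct.map Δ (AlgHom.id R A)) (a ⊗ₜ[R] b)
          = Δ a ⊗ₜ[R] b := rfl
      rw [h1, hΔ a]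
      have h2 : ((↑W⁻¹ : A ⊗[R] A) * (1 ⊗ₜ[R] a) * (W : A ⊗[R] A)) ⊗ₜ[R] b
          = ((↑W⁻¹ : A ⊗[R] A) ⊗ₜ[R] (1 : A)) * (((1 : A) ⊗ₜ[R] a) ⊗ₜ[R] b) *
            ((W : A ⊗[R] A) ⊗ₜ[R] (1 : A)) := by
        rw [Algebra.TensorProduct.tmul_mul_tmul, Algebra.TensorProduct.tmul_mul_tmul]
        simp
      rw [h2, map_mul, map_mul, aux_assoc_tmul_one, aux_assoc_tmul_one]
      have hmid : (Algebra.TensorProduct.assoc R R R A A A) ((((1 : A) ⊗ₜ[R] a)) ⊗ₜ[R] b)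
          = leg23 R A (a ⊗ₜ[R] b) := by
        rw [aux_leg23_apply]
        simp [Algebra.TensorProduct.assoc_tmul]
      rw [hmid, hi12, hv12]
    | add u v hu hv => simp [map_add, hu, hv, mul_add, add_mul]
  -- key2
  have key2 : ∀ u : A ⊗[R] A,
      (Algebra.TensorProduct.map (AlgHom.id R A) Δ) u
      = (u23⁻¹ : _ˣ) * leg13 R A u * u23 := by
    intro u
    induction u using TensorProduct.induction_on with
    | zero => simp
    | tmul a b =>
      have h1 : (Algebra.TensorProduct.map (AlgHom.id R A) Δ) (a ⊗ₜ[R] b)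
          = a ⊗ₜ[R] Δ b := rfl
      rw [h1, hΔ b]
      have h2 : a ⊗ₜ[R] ((↑W⁻¹ : A ⊗[R] A) * (1 ⊗ₜ[R] b) * (W : A ⊗[R] A))
          = ((1 : A) ⊗ₜ[R] (↑W⁻¹ : A ⊗[R] A)) * (a ⊗ₜ[R] ((1 : A) ⊗ₜ[R] b)) *
            ((1 : A) ⊗ₜ[R] (W : A ⊗[R] A)) := by
        rw [Algebra.TensorProduct.tmul_mul_tmul, Algebra.TensorProduct.tmul_mul_tmul]
        simp
      rw [h2, hi23, hv23, aux_leg23_apply, aux_leg23_apply, aux_leg13_tmul]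
    | add u v hu hv => simp [map_add, hu, hv, mul_add, add_mul]
  rw [key1 (Δ x), key2 (Δ x), hΔ x]
  rw [map_mul, map_mul, map_mul, map_mul]
  rw [aux_leg23_apply R A ((1:A) ⊗ₜ[R] x)]
  set T : A ⊗[R] (A ⊗[R] A) := (1 : A) ⊗ₜ[R] ((1 : A) ⊗ₜ[R] x) with hT
  have hleg13T : leg13 R A ((1:A) ⊗ₜ[R] x) = T := rfl
  rw [hleg13T]
  rw [← hi23, ← hv23, ← hi13, ← hv13]
  -- commutation of u12 with T
  have hcomm : ∀ u : A ⊗[R] A, leg12 R A u * T = T * leg12 R A u := by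
    intro u
    induction u using TensorProduct.induction_on with
    | zero => simp
    | tmul a b =>
      have : leg12 R A (a ⊗ₜ[R] b) = a ⊗ₜ[R] (b ⊗ₜ[R] (1 : A)) := rfl
      rw [this, hT, Algebra.TensorProduct.tmul_mul_tmul,
        Algebra.TensorProduct.tmul_mul_tmul, Algebra.TensorProduct.tmul_mul_tmul,
        Algebra.TensorProduct.tmul_mul_tmul]
      simp
    | add u v hu hv => simp [map_add, hu, hv, mul_add, add_mul]
  refine aux_conj_units u12 u13 u23 T hP ?_
  rw [hv12, ← hcomm]
end

section
/- Let R be a commutative ring, A a unital associative R-algebra, σ : A ⊗[R] A → A ⊗[R] A the flip algebra automorphism x ⊗ y ↦ y ⊗ x, and W an invertible element of A ⊗ A satisfying the pentagon equation W₁₂ W₁₃ W₂₃ = W₂₃ W₁₂. Then the element Ŵ := σ(W)⁻¹ = σ(W⁻¹) also satisfies the pentagon equation Ŵ₁₂ Ŵ₁₃ Ŵ₂₃ = Ŵ₂₃ Ŵ₁₂. -/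
open scoped TensorProduct

/-- Reversal of the three tensor factors, `a ⊗ b ⊗ c ↦ c ⊗ b ⊗ a`. -/
noncomputable def rev3 (R A : Type*) [CommRing R] [Ring A] [Algebra R A] :
    A ⊗[R] (A ⊗[R] A) ≃ₐ[R] A ⊗[R] (A ⊗[R] A) :=
  (Algebra.TensorProduct.comm R A (A ⊗[R] A)).trans
    ((Algebra.TensorProduct.congr (Algebra.TensorProduct.comm R A A) AlgEquiv.refl).trans
      (Algebra.TensorProduct.assoc R R R A A A))

lemma rev3_tmul (R A : Type*) [CommRing R] [Ring A] [Algebra R A] (a b c : A) :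
    rev3 R A (a ⊗ₜ[R] (b ⊗ₜ[R] c)) = c ⊗ₜ[R] (b ⊗ₜ[R] a) := by
  simp [rev3]

lemma rev3_leg12 (R A : Type*) [CommRing R] [Ring A] [Algebra R A] (x : A ⊗[R] A) :
    rev3 R A (leg12 R A x) = leg23 R A (Algebra.TensorProduct.comm R A A x) := by
  induction x using TensorProduct.induction_on with
  | zero => simp
  | tmul a b => simp [leg12, leg23, rev3_tmul]
  | add x y hx hy => simp [map_add, hx, hy]

lemma rev3_leg13 (R A : Type*) [CommRing R] [Ring A] [Algebra R A] (x : A ⊗[R] A) :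
    rev3 R A (leg13 R A x) = leg13 R A (Algebra.TensorProduct.comm R A A x) := by
  induction x using TensorProduct.induction_on with
  | zero => simp
  | tmul a b => simp [leg13, rev3_tmul]
  | add x y hx hy => simp [map_add, hx, hy]

lemma rev3_leg23 (R A : Type*) [CommRing R] [Ring A] [Algebra R A] (x : A ⊗[R] A) :
    rev3 R A (leg23 R A x) = leg12 R A (Algebra.TensorProduct.comm R A A x) := by
  induction x using TensorProduct.induction_on with
  | zero => simp
  | tmul a b => simp [leg12, leg23, rev3_tmul]
  | add x y hx hy => simp [map_add, hx, hy]

/-- If `W` is an invertible element of `A ⊗ A` satisfying the pentagon equation and `σ` is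
the flip automorphism of `A ⊗ A`, then `Wdual = σ(W)⁻¹ = σ(W⁻¹)` also satisfies the pentagon
equation. -/
theorem dual_multiplicative_unitary_pentagon
    (R A : Type*) [CommRing R] [Ring A] [Algebra R A]
    (W : (A ⊗[R] A)ˣ)
    (pentagon : leg12 R A (W : A ⊗[R] A) * leg13 R A (W : A ⊗[R] A) *
        leg23 R A (W : A ⊗[R] A)
      = leg23 R A (W : A ⊗[R] A) * leg12 R A (W : A ⊗[R] A))
    (Wdual : A ⊗[R] A)
    (hWdual : Wdual = Algebra.TensorProduct.comm R A A (↑W⁻¹ : A ⊗[R] A)) :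
    leg12 R A Wdual * leg13 R A Wdual * leg23 R A Wdual = leg23 R A Wdual * leg12 R A Wdual := by
  subst hWdual
  set X : A ⊗[R] A := (↑W⁻¹ : A ⊗[R] A) with hX
  -- unit versions of the legs of W
  let W12 : (A ⊗[R] (A ⊗[R] A))ˣ := Units.map (leg12 R A : A ⊗[R] A →* _) W
  let W13 : (A ⊗[R] (A ⊗[R] A))ˣ := Units.map (leg13 R A : A ⊗[R] A →* _) W
  let W23 : (A ⊗[R] (A ⊗[R] A))ˣ := Units.map (leg23 R A : A ⊗[R] A →* _) W
  have hU : W12 * W13 * W23 = W23 * W12 := Units.ext (by simpa [W12, W13, W23] using pentagon)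
  have hInv : W23⁻¹ * W13⁻¹ * W12⁻¹ = W12⁻¹ * W23⁻¹ := by
    have := congrArg (·⁻¹) hU
    simpa [mul_inv_rev, mul_assoc] using this
  have hcoe : leg23 R A X * leg13 R A X * leg12 R A X = leg12 R A X * leg23 R A X := by
    have := congrArg (Units.val) hInv
    simpa [W12, W13, W23, Units.coe_map_inv, hX] using this
  have := congrArg (rev3 R A) hcoe
  simpa [map_mul, rev3_leg12, rev3_leg13, rev3_leg23, mul_assoc] using this
end

section
/- Let N be a natural number and A = ℤ[ℤ^N] the integral group ring of the free abelian group ℤ^N (that is, AddMonoidAlgebra ℤ (Fin N → ℤ)). Let x₀, …, x_{N−1} ∈ A be the group-like elements corresponding to the standard basis vectors of ℤ^N, and let ε : A → ℤ be the augmentation ring homomorphism sending every group-like element to 1 (i.e. summing coefficients). Then (x₀ − 1, …, x_{N−1} − 1) is a regular sequence in A, and the kernel of ε is exactly the ideal generated by the elements xᵢ − 1. -/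
open AddMonoidAlgebra

namespace GRAux

variable {N : ℕ}

/-- projection killing coordinates `< k` -/
def ek (N k : ℕ) : (Fin N → ℤ) →+ (Fin N → ℤ) where
  toFun g := fun i => if k ≤ (i : ℕ) then g i else 0
  map_zero' := by funext i; simp
  map_add' a b := by funext i; by_cases h : k ≤ (i : ℕ) <;> simp [h]

lemma ek_apply (k : ℕ) (g : Fin N → ℤ) (i : Fin N) :
    ek N k g i = if k ≤ (i : ℕ) then g i else 0 := rfl

lemma ek_idem (k : ℕ) (g : Fin N → ℤ) : ek N k (ek N k g) = ek N k g := by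
  funext i; by_cases h : k ≤ (i : ℕ) <;> simp [ek_apply, h]

lemma ek_single_of_lt (k : ℕ) (i : Fin N) (h : (i : ℕ) < k) :
    ek N k (Pi.single i 1) = 0 := by
  funext j
  rcases eq_or_ne j i with rfl | hj
  · simp [ek_apply, Nat.not_le.mpr h]
  · simp [ek_apply, Pi.single_eq_of_ne hj]

lemma ek_single_of_le (k : ℕ) (i : Fin N) (h : k ≤ (i : ℕ)) :
    ek N k (Pi.single i 1) = Pi.single i 1 := by
  funext j
  rcases eq_or_ne j i with rfl | hj
  · simp [ek_apply, h]
  · simp [ek_apply, Pi.single_eq_of_ne hj]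

/-- the ideal generated by `x_i - 1` for `i < k` -/
noncomputable def I (N k : ℕ) : Ideal (AddMonoidAlgebra ℤ (Fin N → ℤ)) :=
  Ideal.span ((fun i : Fin N => (single (Pi.single i 1) 1 : AddMonoidAlgebra ℤ (Fin N → ℤ)) - 1) ''
    {i : Fin N | (i : ℕ) < k})

/-- the ring hom induced by `ek` -/
noncomputable def φ (N k : ℕ) :
    AddMonoidAlgebra ℤ (Fin N → ℤ) →+* AddMonoidAlgebra ℤ (Fin N → ℤ) :=
  mapDomainRingHom ℤ (ek N k)

lemma φ_single (k : ℕ) (g : Fin N → ℤ) (c : ℤ) :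
    φ N k (single g c) = single (ek N k g) c := AddMonoidAlgebra.mapDomain_single

lemma sub_one_mem_I_add {k : ℕ} {g h : Fin N → ℤ}
    (hg : (single g 1 : AddMonoidAlgebra ℤ (Fin N → ℤ)) - 1 ∈ I N k)
    (hh : (single h 1 : AddMonoidAlgebra ℤ (Fin N → ℤ)) - 1 ∈ I N k) :
    (single (g + h) 1 : AddMonoidAlgebra ℤ (Fin N → ℤ)) - 1 ∈ I N k := by
  have : (single (g + h) 1 : AddMonoidAlgebra ℤ (Fin N → ℤ)) - 1
      = single g 1 * (single h 1 - 1) + (single g 1 - 1) := by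
    rw [mul_sub, single_mul_single]; ring_nf
  rw [this]
  exact (I N k).add_mem ((I N k).mul_mem_left _ hh) hg

lemma sub_one_mem_I_neg {k : ℕ} {g : Fin N → ℤ}
    (hg : (single g 1 : AddMonoidAlgebra ℤ (Fin N → ℤ)) - 1 ∈ I N k) :
    (single (-g) 1 : AddMonoidAlgebra ℤ (Fin N → ℤ)) - 1 ∈ I N k := by
  have : (single (-g) 1 : AddMonoidAlgebra ℤ (Fin N → ℤ)) - 1
      = -(single (-g) 1 * (single g 1 - 1)) := by
    rw [mul_sub, single_mul_single]; simp; exact AddMonoidAlgebra.one_def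
  rw [this]
  exact (I N k).neg_mem ((I N k).mul_mem_left _ hg)

/-- the subgroup of `g`'s with `single g 1 - 1 ∈ I N k` -/
noncomputable def T (N k : ℕ) : AddSubgroup (Fin N → ℤ) where
  carrier := {g | (single g 1 : AddMonoidAlgebra ℤ (Fin N → ℤ)) - 1 ∈ I N k}
  zero_mem' := by
    have : (single (0 : Fin N → ℤ) (1:ℤ) : AddMonoidAlgebra ℤ (Fin N → ℤ)) = 1 :=
      AddMonoidAlgebra.one_def.symm
    simp only [Set.mem_setOf_eq, this, sub_self]
    exact (I N k).zero_mem
  add_mem' := sub_one_mem_I_add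
  neg_mem' := sub_one_mem_I_neg

lemma mem_T_of_ek_eq_zero {k : ℕ} {g : Fin N → ℤ} (hg : ek N k g = 0) : g ∈ T N k := by
  have hrep : g = ∑ i : Fin N, Pi.single i (g i) := by
    rw [Finset.univ_sum_single]
  rw [hrep]
  refine AddSubgroup.sum_mem _ fun i _ => ?_
  by_cases h : k ≤ (i : ℕ)
  · have : g i = 0 := by
      have := congrFun hg i
      simpa [ek_apply, h] using this
    simp only [this, Pi.single_zero]
    exact (T N k).zero_mem
  · have h' : (i : ℕ) < k := Nat.not_le.mp h
    have h1 : Pi.single i (g i) = (g i) • (Pi.single i 1 : Fin N → ℤ) := by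
      funext j
      rcases eq_or_ne j i with rfl | hj
      · simp
      · simp [Pi.single_eq_of_ne hj]
    rw [h1]
    refine AddSubgroup.zsmul_mem _ ?_ _
    show (single (Pi.single i 1) 1 : AddMonoidAlgebra ℤ (Fin N → ℤ)) - 1 ∈ I N k
    exact Ideal.subset_span ⟨i, h', rfl⟩

lemma sub_mem_I (k : ℕ) (a : AddMonoidAlgebra ℤ (Fin N → ℤ)) :
    a - φ N k a ∈ I N k := by
  induction a using AddMonoidAlgebra.induction with
  | zero => simp
  | single_add g c rest _ _ ih =>
    have key : (single g c : AddMonoidAlgebra ℤ (Fin N → ℤ)) - single (ek N k g) c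
        = single (ek N k g) c * (single (g - ek N k g) 1 - 1) := by
      rw [mul_sub, single_mul_single, mul_one, add_sub_cancel, mul_one]
    have hmem : (single (g - ek N k g) 1 : AddMonoidAlgebra ℤ (Fin N → ℤ)) - 1 ∈ I N k := by
      refine mem_T_of_ek_eq_zero ?_
      rw [map_sub, ek_idem, sub_self]
    have h1 : (single g c : AddMonoidAlgebra ℤ (Fin N → ℤ)) - φ N k (single g c) ∈ I N k := by
      rw [φ_single, key]
      exact (I N k).mul_mem_left _ hmem
    have h2 := (I N k).add_mem h1 ih
    convert h2 using 1
    rw [map_add]; ring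

lemma ker_eq (k : ℕ) : RingHom.ker (φ N k) = I N k := by
  apply le_antisymm
  · intro a ha
    rw [RingHom.mem_ker] at ha
    have := sub_mem_I (N := N) k a
    rwa [ha, sub_zero] at this
  · rw [I, Ideal.span_le]
    rintro _ ⟨i, hi, rfl⟩
    simp only [SetLike.mem_coe, RingHom.mem_ker, map_sub, map_one]
    rw [φ_single, ek_single_of_lt k i hi]
    have : (single (0 : Fin N → ℤ) (1:ℤ) : AddMonoidAlgebra ℤ (Fin N → ℤ)) = 1 :=
      AddMonoidAlgebra.one_def.symm
    rw [this, sub_self]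

lemma single_ne_one (p : Fin N → ℤ) (h : p ≠ 0) :
    (single p 1 : AddMonoidAlgebra ℤ (Fin N → ℤ)) ≠ 1 := by
  rw [AddMonoidAlgebra.one_def]
  exact fun hc => h (AddMonoidAlgebra.single_left_injective one_ne_zero hc)

lemma pi_single_ne_zero (i : Fin N) : (Pi.single i 1 : Fin N → ℤ) ≠ 0 := by
  intro h; have := congrFun h i; simp at this


end GRAux


/-- In the integral group ring `A = ℤ[ℤ^N]` of the free abelian group `ℤ^N`, with
`xᵢ` the group-like elements of the standard basis vectors and `ε` the augmentation
homomorphism summing coefficients, the elements `xᵢ − 1` form a regular sequence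
and `ker ε` is the ideal they generate. -/
theorem group_ring_augmentation_ideal_regular (N : ℕ)
    (x : Fin N → AddMonoidAlgebra ℤ (Fin N → ℤ))
    (hx : ∀ i : Fin N, x i = AddMonoidAlgebra.single (Pi.single i 1) 1)
    (ε : AddMonoidAlgebra ℤ (Fin N → ℤ) →+* ℤ)
    (hε : ∀ a : AddMonoidAlgebra ℤ (Fin N → ℤ), ε a = Finsupp.sum a.coeff fun _ n => n) :
    RingTheory.Sequence.IsRegular (AddMonoidAlgebra ℤ (Fin N → ℤ))
      (List.ofFn fun i : Fin N => x i - 1) ∧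
    RingHom.ker ε = Ideal.span (Set.range fun i : Fin N => x i - 1) := by
  set rs : List (AddMonoidAlgebra ℤ (Fin N → ℤ)) := List.ofFn (fun i => x i - 1) with hrs
  have hlen : rs.length = N := by simp [hrs]
  -- the ideal of a truncated list is `GRAux.I N k`
  have hofList : ∀ k : ℕ, Ideal.ofList (rs.take k) = GRAux.I N k := by
    intro k
    rw [GRAux.I, Ideal.ofList]
    congr 1
    ext r
    constructor
    · intro hr
      simp only [Set.mem_setOf_eq] at hr
      rw [List.mem_iff_getElem] at hr
      obtain ⟨j, hj, rfl⟩ := hr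
      have hjk : j < k := lt_of_lt_of_le hj (by simp [hrs])
      have hjN : j < N := lt_of_lt_of_le hj (by simp [hrs])
      refine ⟨⟨j, hjN⟩, hjk, ?_⟩
      simp only [List.getElem_take, hrs, List.getElem_ofFn, hx]
    · rintro ⟨i, hik, rfl⟩
      have hik' : (i : ℕ) < k := hik
      have hiN := i.isLt
      have h1 : (i : ℕ) < (rs.take k).length := by
        simp [hrs]; omega
      simp only [Set.mem_setOf_eq]
      rw [List.mem_iff_getElem]
      refine ⟨i, h1, ?_⟩
      simp only [List.getElem_take, hrs, List.getElem_ofFn, hx]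
  -- x i - 1 does not vanish under φ for k ≤ i
  have hφx : ∀ (k : ℕ) (i : Fin N), k ≤ (i : ℕ) → GRAux.φ N k (x i - 1) = x i - 1 := by
    intro k i hki
    rw [map_sub, map_one, hx, GRAux.φ_single, GRAux.ek_single_of_le k i hki]
  have hxne : ∀ i : Fin N, x i - 1 ≠ 0 := by
    intro i h
    rw [sub_eq_zero, hx] at h
    exact GRAux.single_ne_one _ (GRAux.pi_single_ne_zero i) h
  -- weak regularity
  have hwr : RingTheory.Sequence.IsWeaklyRegular (AddMonoidAlgebra ℤ (Fin N → ℤ)) rs := by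
    rw [RingTheory.Sequence.isWeaklyRegular_iff]
    intro j hj
    have hjN : j < N := hlen ▸ hj
    have hgj : rs[j]'hj = x ⟨j, hjN⟩ - 1 := List.getElem_ofFn _
    intro a b hab
    obtain ⟨a, rfl⟩ := Submodule.Quotient.mk_surjective _ a
    obtain ⟨b, rfl⟩ := Submodule.Quotient.mk_surjective _ b
    have hJ : (Ideal.ofList (rs.take j) • ⊤ : Submodule (AddMonoidAlgebra ℤ (Fin N → ℤ)) (AddMonoidAlgebra ℤ (Fin N → ℤ))) = GRAux.I N j := by
      rw [smul_eq_mul, Ideal.mul_top, hofList]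
    have hab' : rs[j]'hj • (Submodule.Quotient.mk a :
        _ ⧸ (Ideal.ofList (List.take j rs) • ⊤ : Submodule (AddMonoidAlgebra ℤ (Fin N → ℤ)) (AddMonoidAlgebra ℤ (Fin N → ℤ))))
        = rs[j]'hj • Submodule.Quotient.mk b := hab
    rw [← Submodule.Quotient.mk_smul, ← Submodule.Quotient.mk_smul,
      Submodule.Quotient.eq] at hab'
    rw [Submodule.Quotient.eq]
    rw [hJ] at hab' ⊢
    rw [← GRAux.ker_eq] at hab' ⊢
    rw [RingHom.mem_ker] at hab' ⊢
    have : rs[j]'hj • a - rs[j]'hj • b = rs[j]'hj * (a - b) := by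
      rw [smul_eq_mul, smul_eq_mul, mul_sub]
    rw [this, map_mul, hgj, hφx j ⟨j, hjN⟩ le_rfl] at hab'
    rcases mul_eq_zero.mp hab' with h | h
    · exact absurd h (hxne _)
    · exact h
  -- the full ideal is I N N
  have hspan : Ideal.span (Set.range (fun i : Fin N => x i - 1)) = GRAux.I N N := by
    rw [GRAux.I]
    congr 1
    ext r
    simp only [Set.mem_range, Set.mem_image, Set.mem_setOf_eq]
    constructor
    · rintro ⟨i, rfl⟩
      exact ⟨i, i.isLt, by rw [hx]⟩
    · rintro ⟨i, -, rfl⟩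
      exact ⟨i, by rw [hx]⟩
  have hofListFull : Ideal.ofList rs = GRAux.I N N := by
    have : rs.take N = rs := List.take_of_length_le (le_of_eq hlen)
    rw [← this, hofList]
  -- φ N N computes the augmentation
  have hφε : ∀ a : AddMonoidAlgebra ℤ (Fin N → ℤ),
      GRAux.φ N N a = AddMonoidAlgebra.single 0 (ε a) := by
    have hεs : ∀ (g : Fin N → ℤ) (c : ℤ), ε (AddMonoidAlgebra.single g c) = c := by
      intro g c
      rw [hε]; exact Finsupp.sum_single_index rfl
    have hg0 : ∀ g : Fin N → ℤ, GRAux.ek N N g = 0 := by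
      intro g
      funext i
      rw [GRAux.ek_apply]
      simp [Nat.not_le.mpr i.isLt]
    have h := AddMonoidAlgebra.addMonoidHom_ext
      (f := AddMonoidHomClass.toAddMonoidHom (GRAux.φ N N))
      (g := (AddMonoidAlgebra.singleAddHom (0 : Fin N → ℤ)).comp (AddMonoidHomClass.toAddMonoidHom ε))
      (fun g c => by
        show GRAux.φ N N (AddMonoidAlgebra.single g c)
          = AddMonoidAlgebra.singleAddHom (0 : Fin N → ℤ) (ε (AddMonoidAlgebra.single g c))
        rw [GRAux.φ_single, hg0, hεs, AddMonoidAlgebra.singleAddHom_apply])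
    intro a
    exact DFunLike.congr_fun h a
  have hker : RingHom.ker ε = GRAux.I N N := by
    rw [← GRAux.ker_eq]
    ext a
    rw [RingHom.mem_ker, RingHom.mem_ker, hφε]
    constructor
    · intro h; rw [h]; exact AddMonoidAlgebra.single_zero _
    · intro h
      have := AddMonoidAlgebra.single_eq_zero.mp h
      exact this
  -- ideal is proper
  have hne : (⊤ : Submodule (AddMonoidAlgebra ℤ (Fin N → ℤ)) (AddMonoidAlgebra ℤ (Fin N → ℤ))) ≠ Ideal.ofList rs • ⊤ := by
    rw [smul_eq_mul, Ideal.mul_top, hofListFull]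
    intro h
    have h1 : (1 : AddMonoidAlgebra ℤ (Fin N → ℤ)) ∈ GRAux.I N N := h ▸ trivial
    rw [← GRAux.ker_eq, RingHom.mem_ker, map_one] at h1
    exact one_ne_zero h1
  exact ⟨⟨hwr, hne⟩, hker.trans hspan.symm⟩
end
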